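/- Let d ≥ 1, let V = {1,…,n}, and let F be a family of (d+1)-element subsets of V. Fix a vertex i ∈ V, let link_F(i) = { σ \ {i} : σ ∈ F, i ∈ σ }, suppose |link_F(i)| ≥ d+1, and let W = {v_1 < v_2 < … < v_m} be the set of vertices belonging to some member of link_F(i), with m ≥ d+1. Let Λ_d(W) = {{v_1,…,v_{d+1}}} ∪ { {v_1} ∪ S ∪ {v_j} : S a (d−1)-element subset of {v_2,…,v_{d+1}}, d+2 ≤ j ≤ m } (the copy of the LGRC on W). Assume that every d-element subset of every member of Λ_d(W) belongs to link_F(i). If the family { σ ∈ F : i ∉ σ } ∪ Λ_d(W) is generically globally d-volume rigid on the vertex set V \ {i}, then F is generically globally d-volume rigid on V. -/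

import Mathlib

/-- The signed `d`-volume of the `(d+1)`-element simplex `σ ⊆ ℕ` at the configuration
`p : ℕ → Fin d → ℝ`.  Junk value `0` if `σ` does not have `d+1` elements. -/
noncomputable def vol (d : ℕ) (σ : Finset ℕ) (p : ℕ → Fin d → ℝ) : ℝ :=
  if h : σ.card = d + 1 then
    Matrix.det
      ((Matrix.of (Fin.cons (fun _ => (1 : ℝ)) fun i j => p (σ.orderEmbOfFin h j) i) :
        Matrix (Fin (d + 1)) (Fin (d + 1)) ℝ))
  else 0

/-- A configuration of the finite vertex set `V` in `ℝ^d` is generic if every nonzero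
polynomial with rational coefficients in the `d·|V|` coordinate variables is nonzero at the
coordinates of the configuration. -/
def IsGeneric (d : ℕ) (V : Finset ℕ) (p : ℕ → Fin d → ℝ) : Prop :=
  ∀ f : MvPolynomial (↥V × Fin d) ℚ, f ≠ 0 →
    (MvPolynomial.aeval fun v : ↥V × Fin d => p v.1.1 v.2) f ≠ 0

/-- A family `F` of `(d+1)`-element subsets of the finite vertex set `V` is generically
globally `d`-volume rigid if for all generic configurations `p, q` of `V` whose signed
volumes agree on every member of `F`, the signed volumes agree on every `(d+1)`-element
subset of `V`. -/
def GenGlobRigid (d : ℕ) (V : Finset ℕ) (F : Finset (Finset ℕ)) : Prop :=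
  ∀ p q : ℕ → Fin d → ℝ, IsGeneric d V p → IsGeneric d V q →
    (∀ σ ∈ F, vol d σ p = vol d σ q) →
    ∀ τ ⊆ V, τ.card = d + 1 → vol d τ p = vol d τ q

/-- The link of the vertex `i` in the family `F` of `d`-simplices:
`{ σ \ {i} : σ ∈ F, i ∈ σ }`. -/
def link (i : ℕ) (F : Finset (Finset ℕ)) : Finset (Finset ℕ) :=
  (F.filter fun σ => i ∈ σ).image fun σ => σ.erase i

/-- The set `Λ_d` of `d`-simplices of the lexicographically greedy rigid complex (LGRC)
on vertex set `{1, …, n}`. -/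
def LGRC (d n : ℕ) : Finset (Finset ℕ) :=
  insert (Finset.Icc 1 (d + 1))
    (((Finset.Icc (d + 2) n) ×ˢ ((Finset.Icc 2 (d + 1)).powersetCard (d - 1))).image
      fun x => insert 1 (insert x.1 x.2))

/-- The copy of the LGRC on the finite vertex set `W = {v_1 < v_2 < … < v_m}`, obtained by
relabelling the LGRC on `{1, …, m}` via `t ↦ v_t` (the `t`-th smallest element of `W`). -/
def LGRCOn (d : ℕ) (W : Finset ℕ) : Finset (Finset ℕ) :=
  (LGRC d W.card).image fun σ => σ.image fun t => (W.sort (· ≤ ·)).getD (t - 1) 0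

noncomputable def gvol (d : ℕ) (f : Fin (d+1) → ℕ) (p : ℕ → Fin d → ℝ) : ℝ :=
  Matrix.det
    ((Matrix.of (Fin.cons (fun _ => (1 : ℝ)) fun i j => p (f j) i) :
      Matrix (Fin (d + 1)) (Fin (d + 1)) ℝ))
lemma vol_eq_gvol (d : ℕ) (σ : Finset ℕ) (h : σ.card = d + 1) (p : ℕ → Fin d → ℝ) :
    vol d σ p = gvol d (σ.orderEmbOfFin h) p := by
  rw [vol, dif_pos h]; rfl
lemma gvol_eq_det_rows (d : ℕ) (f : Fin (d+1) → ℕ) (p : ℕ → Fin d → ℝ) :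
    gvol d f p = Matrix.det (Matrix.of fun j k => (Fin.cons 1 (p (f j)) : Fin (d+1) → ℝ) k) := by
  rw [gvol, ← Matrix.det_transpose]
  congr 1
  ext j k
  simp only [Matrix.transpose_apply, Matrix.of_apply]
  refine Fin.cases ?_ (fun k => ?_) k <;> simp
lemma gvol_of_not_injective (d : ℕ) (f : Fin (d+1) → ℕ) (p : ℕ → Fin d → ℝ)
    (hf : ¬ Function.Injective f) : gvol d f p = 0 := by
  rw [Function.not_injective_iff] at hf
  obtain ⟨a, b, hab, hne⟩ := hf
  rw [gvol_eq_det_rows]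
  exact Matrix.det_zero_of_row_eq hne (by funext k; simp [Matrix.of_apply, hab])
lemma gvol_comp_perm (d : ℕ) (f : Fin (d+1) → ℕ) (π : Equiv.Perm (Fin (d+1)))
    (p : ℕ → Fin d → ℝ) :
    gvol d (f ∘ π) p = ((Equiv.Perm.sign π : ℤ) : ℝ) * gvol d f p := by
  rw [gvol_eq_det_rows, gvol_eq_det_rows d f]
  have : (Matrix.of fun j k => (Fin.cons 1 (p ((f ∘ π) j)) : Fin (d+1) → ℝ) k)
      = (Matrix.of fun j k => (Fin.cons 1 (p (f j)) : Fin (d+1) → ℝ) k).submatrix π id := by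
    ext j k; rfl
  rw [this, Matrix.det_permute]
lemma image_univ_orderEmbOfFin {k : ℕ} (s : Finset ℕ) (h : s.card = k) :
    Finset.univ.image (s.orderEmbOfFin h) = s := by
  ext x
  simp only [Finset.mem_image, Finset.mem_univ, true_and]
  constructor
  · rintro ⟨j, rfl⟩; exact Finset.orderEmbOfFin_mem s h j
  · intro hx
    have : x ∈ Set.range (s.orderEmbOfFin h) := by
      rw [Finset.range_orderEmbOfFin]; exact hx
    obtain ⟨j, hj⟩ := this
    exact ⟨j, hj⟩
lemma gvol_injective (d : ℕ) (f : Fin (d+1) → ℕ) (hf : Function.Injective f) :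
    ∃ c : ℝ, c ≠ 0 ∧ ∀ p : ℕ → Fin d → ℝ,
      gvol d f p = c * vol d (Finset.univ.image f) p := by
  set s := Finset.univ.image f with hs
  have hcard : s.card = d + 1 := by
    rw [hs, Finset.card_image_of_injective _ hf, Finset.card_univ, Fintype.card_fin]
  set e := s.orderEmbOfFin hcard with he
  have hmemf : ∀ j, f j ∈ s := fun j => Finset.mem_image_of_mem f (Finset.mem_univ j)
  have hmeme : ∀ j, (e j : ℕ) ∈ s := fun j => Finset.orderEmbOfFin_mem s hcard j
  have hF1 : Function.Bijective (fun j => (⟨f j, hmemf j⟩ : s)) := by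
    rw [Fintype.bijective_iff_injective_and_card]
    constructor
    · intro a b hab
      exact hf (congrArg Subtype.val hab)
    · simp [hcard]
  have hE1 : Function.Bijective (fun j => (⟨e j, hmeme j⟩ : s)) := by
    rw [Fintype.bijective_iff_injective_and_card]
    constructor
    · intro a b hab
      exact (Finset.orderEmbOfFin s hcard).injective (congrArg Subtype.val hab)
    · simp [hcard]
  set π : Equiv.Perm (Fin (d+1)) :=
    (Equiv.ofBijective _ hF1).trans (Equiv.ofBijective _ hE1).symm with hπ
  have hfe : f = e ∘ π := by
    funext j
    have : (⟨e (π j), hmeme _⟩ : s) = ⟨f j, hmemf j⟩ := by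
      show (fun j => (⟨e j, hmeme j⟩ : s)) (π j) = _
      rw [hπ]
      simp only [Equiv.trans_apply]
      exact (Equiv.ofBijective _ hE1).apply_symm_apply _
    simpa using congrArg Subtype.val this.symm
  refine ⟨((Equiv.Perm.sign π : ℤ) : ℝ), by simp, fun p => ?_⟩
  rw [hfe, gvol_comp_perm, vol_eq_gvol d s hcard p]
lemma gvol_flip (d : ℕ) (g : Fin (d+2) → ℕ) (p : ℕ → Fin d → ℝ) :
    ∑ j : Fin (d+2), (-1:ℝ)^(j:ℕ) * gvol d (g ∘ j.succAbove) p = 0 := by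
  set B : Matrix (Fin (d+2)) (Fin (d+2)) ℝ :=
    Matrix.of fun r c => (Fin.cons 1 (Fin.cons 1 (p (g c))) : Fin (d+2) → ℝ) r with hB
  have hdet0 : B.det = 0 := by
    refine Matrix.det_zero_of_row_eq (i := 0) (j := 1) (by simp) ?_
    funext c
    show (Fin.cons 1 (Fin.cons 1 (p (g c))) : Fin (d+2) → ℝ) 0
        = (Fin.cons 1 (Fin.cons 1 (p (g c))) : Fin (d+2) → ℝ) 1
    rw [Fin.cons_zero, show (1 : Fin (d+2)) = Fin.succ 0 from rfl, Fin.cons_succ, Fin.cons_zero]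
  have hexp := Matrix.det_succ_row_zero B
  rw [hdet0] at hexp
  have hsub : ∀ c : Fin (d+2),
      (B.submatrix Fin.succ c.succAbove).det = gvol d (g ∘ c.succAbove) p := by
    intro c
    rw [gvol]
    congr 1
    ext r c'
    simp only [Matrix.submatrix_apply, Matrix.of_apply, hB, Function.comp_apply]
    rw [Fin.cons_succ]
    refine Fin.cases ?_ (fun k => ?_) r <;> simp
  have hterm : ∀ c : Fin (d+2), (-1:ℝ)^(c:ℕ) * B 0 c * (B.submatrix Fin.succ c.succAbove).det
      = (-1:ℝ)^(c:ℕ) * gvol d (g ∘ c.succAbove) p := by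
    intro c
    rw [hsub c]
    have h1 : B 0 c = 1 := by simp [hB]
    rw [h1, mul_one]
  exact (hexp.trans (Finset.sum_congr rfl fun c _ => hterm c)).symm
lemma gvol_update_sum (d : ℕ) (p : ℕ → Fin d → ℝ) (f : Fin (d+1) → ℕ) (s : Fin (d+1))
    (w : ℕ) (v : Fin (d+1) → ℕ) (lam : Fin (d+1) → ℝ)
    (hlam : (Fin.cons 1 (p w) : Fin (d+1) → ℝ)
      = ∑ k : Fin (d+1), lam k • (Fin.cons 1 (p (v k)) : Fin (d+1) → ℝ)) :
    gvol d (Function.update f s w) p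
      = ∑ k : Fin (d+1), lam k * gvol d (Function.update f s (v k)) p := by
  have hrow : ∀ u : ℕ,
      (fun j => (Fin.cons 1 (p (Function.update f s u j)) : Fin (d+1) → ℝ))
      = Function.update (fun j => (Fin.cons 1 (p (f j)) : Fin (d+1) → ℝ)) s
          (Fin.cons 1 (p u)) := by
    intro u
    funext j
    by_cases hj : j = s
    · subst hj; simp [Function.update_self]
    · simp [Function.update_of_ne hj]
  have hgv : ∀ u : ℕ, gvol d (Function.update f s u) p =
      (Matrix.detRowAlternating : (Fin (d+1) → ℝ) [⋀^Fin (d+1)]→ₗ[ℝ] ℝ)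
        (Function.update (fun j => (Fin.cons 1 (p (f j)) : Fin (d+1) → ℝ)) s
          (Fin.cons 1 (p u))) := by
    intro u
    rw [gvol_eq_det_rows]
    show Matrix.detRowAlternating _ = _
    rw [← hrow u]
    rfl
  rw [hgv w, hlam, AlternatingMap.map_update_sum]
  refine Finset.sum_congr rfl fun k _ => ?_
  rw [AlternatingMap.map_update_smul, hgv (v k)]
  simp
lemma update_injective {k : ℕ} (f : Fin k → ℕ) (hf : Function.Injective f)
    (s : Fin k) (w : ℕ) (hw : ∀ j, j ≠ s → f j ≠ w) :
    Function.Injective (Function.update f s w) := by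
  intro a b hab
  by_cases ha : a = s <;> by_cases hb : b = s
  · rw [ha, hb]
  · rw [ha, Function.update_self, Function.update_of_ne hb] at hab
    exact absurd hab.symm (hw b hb)
  · rw [hb, Function.update_self, Function.update_of_ne ha] at hab
    exact absurd hab (hw a ha)
  · rw [Function.update_of_ne ha, Function.update_of_ne hb] at hab
    exact hf hab
lemma update_not_injective {k : ℕ} (f : Fin k → ℕ) (s s' : Fin k) (hss : s' ≠ s) :
    ¬ Function.Injective (Function.update f s (f s')) := by
  intro h
  have : Function.update f s (f s') s = Function.update f s (f s') s' := by
    rw [Function.update_self, Function.update_of_ne hss]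
  exact hss (h this).symm
lemma image_update {k : ℕ} (f : Fin k → ℕ) (hf : Function.Injective f)
    (s : Fin k) (w : ℕ) :
    Finset.univ.image (Function.update f s w)
      = insert w ((Finset.univ.image f).erase (f s)) := by
  ext x
  simp only [Finset.mem_image, Finset.mem_univ, true_and, Finset.mem_insert, Finset.mem_erase]
  constructor
  · rintro ⟨j, rfl⟩
    by_cases hj : j = s
    · subst hj; left; rw [Function.update_self]
    · right
      rw [Function.update_of_ne hj]
      exact ⟨fun h => hj (hf h), ⟨j, rfl⟩⟩
  · rintro (rfl | ⟨hx, j, rfl⟩)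
    · exact ⟨s, Function.update_self _ _ _⟩
    · have hj : j ≠ s := fun h => hx (by rw [h])
      exact ⟨j, Function.update_of_ne hj _ _⟩
lemma exists_lam (d : ℕ) (p : ℕ → Fin d → ℝ) (v : Fin (d+1) → ℕ)
    (hdet : gvol d v p ≠ 0) (w : ℕ) :
    ∃ lam : Fin (d+1) → ℝ, (Fin.cons 1 (p w) : Fin (d+1) → ℝ)
      = ∑ k : Fin (d+1), lam k • (Fin.cons 1 (p (v k)) : Fin (d+1) → ℝ) := by
  set A : Matrix (Fin (d+1)) (Fin (d+1)) ℝ :=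
    Matrix.of fun j c => (Fin.cons 1 (p (v j)) : Fin (d+1) → ℝ) c with hA
  have hAdet : A.det ≠ 0 := by
    rw [gvol_eq_det_rows] at hdet; exact hdet
  have hunit : IsUnit A.det := isUnit_iff_ne_zero.mpr hAdet
  set b : Fin (d+1) → ℝ := Fin.cons 1 (p w) with hb
  refine ⟨Matrix.vecMul b A⁻¹, ?_⟩
  have h1 : Matrix.vecMul (Matrix.vecMul b A⁻¹) A = b := by
    rw [Matrix.vecMul_vecMul, Matrix.nonsing_inv_mul A hunit, Matrix.vecMul_one]
  funext c
  have := congrFun h1 c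
  rw [Matrix.vecMul, dotProduct] at this
  rw [← this]
  simp only [Finset.sum_apply, Pi.smul_apply, smul_eq_mul]
  rfl
lemma IsGeneric.mono {d : ℕ} {V V' : Finset ℕ} {p : ℕ → Fin d → ℝ}
    (hVV : V' ⊆ V) (hp : IsGeneric d V p) : IsGeneric d V' p := by
  intro f hf
  have hjinj : Function.Injective
      (fun x : ↥V' × Fin d => ((⟨x.1.1, hVV x.1.2⟩ : ↥V), x.2)) := by
    rintro ⟨⟨a, ha⟩, r⟩ ⟨⟨b, hb⟩, r'⟩ hab
    simp only [Prod.mk.injEq, Subtype.mk.injEq] at hab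
    simp [hab.1, hab.2]
  have h1 : MvPolynomial.rename
      (fun x : ↥V' × Fin d => ((⟨x.1.1, hVV x.1.2⟩ : ↥V), x.2)) f ≠ 0 := by
    intro h
    apply hf
    apply MvPolynomial.rename_injective (R := ℚ) _ hjinj
    rw [h, map_zero]
  have h2 := hp _ h1
  rw [MvPolynomial.aeval_rename] at h2
  exact h2
lemma det_indicator (d : ℕ) :
    Matrix.det (Matrix.of fun r j : Fin (d+1) =>
      if r = 0 then (1:ℚ) else if j = r then 1 else 0) = 1 := by
  rw [Matrix.det_succ_column_zero, Fin.sum_univ_succ]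
  have h0 : ∀ k : Fin d, ((-1:ℚ)^((Fin.succ k : Fin (d+1)) : ℕ) *
      (Matrix.of fun r j : Fin (d+1) => if r = 0 then (1:ℚ) else if j = r then 1 else 0)
        (Fin.succ k) 0 *
      ((Matrix.of fun r j : Fin (d+1) => if r = 0 then (1:ℚ) else if j = r then 1 else 0
        ).submatrix (Fin.succ k).succAbove Fin.succ).det) = 0 := by
    intro k
    have hz : (Matrix.of fun r j : Fin (d+1) =>
        if r = 0 then (1:ℚ) else if j = r then 1 else 0) (Fin.succ k) 0 = 0 := by
      show (if (Fin.succ k : Fin (d+1)) = 0 then (1:ℚ)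
        else if (0 : Fin (d+1)) = Fin.succ k then 1 else 0) = 0
      rw [if_neg (Fin.succ_ne_zero k), if_neg (Ne.symm (Fin.succ_ne_zero k))]
    rw [hz, mul_zero, zero_mul]
  rw [Finset.sum_eq_zero fun k _ => h0 k, add_zero]
  have h1 : (Matrix.of fun r j : Fin (d+1) =>
      if r = 0 then (1:ℚ) else if j = r then 1 else 0) 0 0 = 1 := by
    show (if (0 : Fin (d+1)) = 0 then (1:ℚ)
      else if (0 : Fin (d+1)) = 0 then 1 else 0) = 1
    rw [if_pos rfl]
  have h2 : ((Matrix.of fun r j : Fin (d+1) =>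
      if r = 0 then (1:ℚ) else if j = r then 1 else 0
      ).submatrix (0 : Fin (d+1)).succAbove Fin.succ) = 1 := by
    ext r j
    simp only [Matrix.submatrix_apply, Fin.succAbove_zero, Matrix.of_apply, Matrix.one_apply]
    rw [if_neg (Fin.succ_ne_zero r)]
    by_cases h : r = j
    · subst h; simp
    · rw [if_neg (fun hc => h (Fin.succ_injective _ hc).symm), if_neg h]
  rw [h1, h2, Matrix.det_one]
  norm_num
lemma vol_ne_zero (d : ℕ) (V σ : Finset ℕ) (hσV : σ ⊆ V) (h : σ.card = d+1)
    (p : ℕ → Fin d → ℝ) (hp : IsGeneric d V p) : vol d σ p ≠ 0 := by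
  set e := σ.orderEmbOfFin h with he
  set M : Matrix (Fin (d+1)) (Fin (d+1)) (MvPolynomial (↥V × Fin d) ℚ) :=
    Matrix.of (Fin.cons (fun _ => (1 : MvPolynomial (↥V × Fin d) ℚ))
      fun r j => MvPolynomial.X (⟨⟨e j, hσV (Finset.orderEmbOfFin_mem σ h j)⟩, r⟩)) with hM
  set φ : ↥V × Fin d → ℝ := fun v => p v.1.1 v.2 with hφ
  have hmapdet : (MvPolynomial.aeval φ) M.det = vol d σ p := by
    rw [show (MvPolynomial.aeval φ) M.det = (M.map (MvPolynomial.aeval φ)).det from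
      RingHom.map_det (MvPolynomial.aeval φ).toRingHom M, vol, dif_pos h]
    congr 1
    ext r j
    simp only [Matrix.map_apply, hM, Matrix.of_apply]
    refine Fin.cases ?_ (fun k => ?_) r
    · rw [Fin.cons_zero, Fin.cons_zero]; simp
    · rw [Fin.cons_succ, Fin.cons_succ]
      simp [hφ, he]
  have hfne : M.det ≠ 0 := by
    intro h0
    set g : ↥V × Fin d → ℚ := fun x => if (x.1 : ℕ) = e (Fin.succ x.2) then 1 else 0 with hg
    have heval : (MvPolynomial.eval g) M.det = 1 := by
      rw [show (MvPolynomial.eval g) M.det = (M.map (MvPolynomial.eval g)).det from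
        RingHom.map_det (MvPolynomial.eval g) M]
      have : M.map (MvPolynomial.eval g) = Matrix.of fun r j : Fin (d+1) =>
          if r = 0 then (1:ℚ) else if j = r then 1 else 0 := by
        ext r j
        simp only [Matrix.map_apply, hM, Matrix.of_apply]
        refine Fin.cases ?_ (fun k => ?_) r
        · rw [Fin.cons_zero]; simp
        · rw [Fin.cons_succ]
          simp only [MvPolynomial.eval_X, hg]
          rw [if_neg (Fin.succ_ne_zero k)]
          by_cases hjk : j = Fin.succ k
          · rw [if_pos (by rw [hjk]), if_pos hjk]
          · rw [if_neg (fun hc => hjk (e.injective hc)), if_neg hjk]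
      rw [this, det_indicator]
    rw [h0, map_zero] at heval
    exact zero_ne_one heval
  have := hp M.det hfne
  rw [hmapdet] at this
  exact this
lemma mem_link_insert {i : ℕ} {F : Finset (Finset ℕ)} {T : Finset ℕ} (h : T ∈ link i F) :
    insert i T ∈ F ∧ i ∉ T := by
  rw [link, Finset.mem_image] at h
  obtain ⟨σ, hσ, rfl⟩ := h
  rw [Finset.mem_filter] at hσ
  exact ⟨by rw [Finset.insert_erase hσ.2]; exact hσ.1, Finset.notMem_erase i σ⟩
lemma LGRC_mem {d m : ℕ} (hd : 1 ≤ d) (hm : d + 1 ≤ m) {σ : Finset ℕ}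
    (h : σ ∈ LGRC d m) : σ ⊆ Finset.Icc 1 m ∧ σ.card = d + 1 := by
  rw [LGRC, Finset.mem_insert] at h
  rcases h with rfl | h
  · constructor
    · exact Finset.Icc_subset_Icc le_rfl hm
    · rw [Nat.card_Icc]; omega
  · rw [Finset.mem_image] at h
    obtain ⟨⟨a, S⟩, hmem, rfl⟩ := h
    rw [Finset.mem_product, Finset.mem_Icc, Finset.mem_powersetCard] at hmem
    obtain ⟨⟨ha1, ha2⟩, hS, hScard⟩ := hmem
    have hSsub : ∀ x ∈ S, 2 ≤ x ∧ x ≤ d + 1 := by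
      intro x hx
      have := hS hx
      rw [Finset.mem_Icc] at this
      exact this
    have haS : a ∉ S := fun hc => by have := (hSsub a hc).2; omega
    have h1S : (1 : ℕ) ∉ insert a S := by
      rw [Finset.mem_insert]
      rintro (rfl | hc)
      · omega
      · have := (hSsub 1 hc).1; omega
    constructor
    · intro x hx
      rw [Finset.mem_insert, Finset.mem_insert] at hx
      rw [Finset.mem_Icc]
      rcases hx with rfl | rfl | hx
      · omega
      · omega
      · have := hSsub x hx; omega
    · rw [Finset.card_insert_of_notMem h1S, Finset.card_insert_of_notMem haS, hScard]
      omega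
lemma relabel_mem {W : Finset ℕ} {t : ℕ} (h : t ∈ Finset.Icc 1 W.card) :
    (W.sort (· ≤ ·)).getD (t - 1) 0 ∈ W := by
  rw [Finset.mem_Icc] at h
  have hlt : t - 1 < (W.sort (· ≤ ·)).length := by
    rw [Finset.length_sort]; omega
  rw [List.getD_eq_getElem _ _ hlt]
  rw [← Finset.mem_sort (· ≤ ·)]
  exact List.getElem_mem hlt
lemma relabel_injOn (W : Finset ℕ) :
    Set.InjOn (fun t => (W.sort (· ≤ ·)).getD (t - 1) 0) (Finset.Icc 1 W.card) := by
  intro a ha b hb hab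
  simp only [Finset.coe_Icc, Set.mem_Icc] at ha hb
  have hla : a - 1 < (W.sort (· ≤ ·)).length := by rw [Finset.length_sort]; omega
  have hlb : b - 1 < (W.sort (· ≤ ·)).length := by rw [Finset.length_sort]; omega
  simp only [List.getD_eq_getElem _ _ hla, List.getD_eq_getElem _ _ hlb] at hab
  have := ((W.sort_nodup (· ≤ ·)).getElem_inj_iff).mp hab
  omega
lemma LGRCOn_mem {d : ℕ} {W : Finset ℕ} (hd : 1 ≤ d) (hm : d + 1 ≤ W.card)
    {σ : Finset ℕ} (h : σ ∈ LGRCOn d W) : σ ⊆ W ∧ σ.card = d + 1 := by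
  rw [LGRCOn, Finset.mem_image] at h
  obtain ⟨ρ, hρ, rfl⟩ := h
  obtain ⟨hsub, hcard⟩ := LGRC_mem hd hm hρ
  constructor
  · intro x hx
    rw [Finset.mem_image] at hx
    obtain ⟨t, ht, rfl⟩ := hx
    exact relabel_mem (hsub ht)
  · rw [Finset.card_image_of_injOn ((relabel_injOn W).mono (by exact_mod_cast hsub)), hcard]
lemma image_comp_succAbove {k : ℕ} (g : Fin (k+1) → ℕ) (hg : Function.Injective g)
    (j : Fin (k+1)) :
    Finset.univ.image (g ∘ j.succAbove) = (Finset.univ.image g).erase (g j) := by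
  ext x
  simp only [Finset.mem_image, Finset.mem_univ, true_and, Finset.mem_erase,
    Function.comp_apply]
  constructor
  · rintro ⟨c, rfl⟩
    exact ⟨fun h => (Fin.succAbove_ne j c) (hg h), ⟨_, rfl⟩⟩
  · rintro ⟨hne, j', rfl⟩
    have hj' : j' ≠ j := fun h => hne (by rw [h])
    obtain ⟨c, hc⟩ := Fin.exists_succAbove_eq hj'
    exact ⟨c, by rw [hc]⟩
lemma orderEmbOfFin_exists_eq {k : ℕ} (s : Finset ℕ) (h : s.card = k) {x : ℕ}
    (hx : x ∈ s) : ∃ j, s.orderEmbOfFin h j = x := by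
  have : x ∈ Set.range (s.orderEmbOfFin h) := by
    rw [Finset.range_orderEmbOfFin]; exact hx
  exact this

/-- Vertex Removal Lemma with the LGRC in place of the complete complex: if
`|link_F(i)| ≥ d+1`, `W` is the vertex set of `link_F(i)` with `|W| ≥ d+1`, every
`d`-subset of every member of the copy `Λ_d(W)` of the LGRC on `W` lies in `link_F(i)`,
and `{σ ∈ F : i ∉ σ} ∪ Λ_d(W)` is generically globally `d`-volume rigid on `V \ {i}`,
then `F` is generically globally `d`-volume rigid on `V = {1, …, n}`. -/
theorem vertex_removal_LGRC (d n : ℕ) (hd : 1 ≤ d)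
    (F : Finset (Finset ℕ)) (hF : ∀ σ ∈ F, σ ⊆ Finset.Icc 1 n ∧ σ.card = d + 1)
    (i : ℕ) (hi : i ∈ Finset.Icc 1 n)
    (hlink : d + 1 ≤ (link i F).card)
    (W : Finset ℕ) (hW : W = (link i F).biUnion id)
    (hm : d + 1 ≤ W.card)
    (hfaces : ∀ σ ∈ LGRCOn d W, ∀ T ∈ σ.powersetCard d, T ∈ link i F)
    (hrigid : GenGlobRigid d ((Finset.Icc 1 n).erase i)
      ((F.filter fun σ => i ∉ σ) ∪ LGRCOn d W)) :
    GenGlobRigid d (Finset.Icc 1 n) F := by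
  intro p q hp hq hvolF τ hτV hτcard
  -- W avoids i and lies in the vertex set
  have hWsub : W ⊆ (Finset.Icc 1 n).erase i := by
    intro x hx
    rw [hW, Finset.mem_biUnion] at hx
    obtain ⟨T, hT, hxT⟩ := hx
    rw [link, Finset.mem_image] at hT
    obtain ⟨σ, hσ, rfl⟩ := hT
    rw [Finset.mem_filter] at hσ
    simp only [id] at hxT
    rw [Finset.mem_erase] at hxT ⊢
    exact ⟨hxT.1, (hF σ hσ.1).1 hxT.2⟩
  have hiW : i ∉ W := fun hc => (Finset.mem_erase.mp (hWsub hc)).1 rfl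
  have hp' : IsGeneric d ((Finset.Icc 1 n).erase i) p :=
    IsGeneric.mono (Finset.erase_subset i _) hp
  have hq' : IsGeneric d ((Finset.Icc 1 n).erase i) q :=
    IsGeneric.mono (Finset.erase_subset i _) hq
  -- volumes agree on the relabelled LGRC
  have hLG : ∀ σ' ∈ LGRCOn d W, vol d σ' p = vol d σ' q := by
    intro σ' hσ'
    obtain ⟨hσ'W, hσ'card⟩ := LGRCOn_mem hd hm hσ'
    have hiσ' : i ∉ σ' := fun hc => hiW (hσ'W hc)
    have hρcard : (insert i σ').card = d + 2 := by
      rw [Finset.card_insert_of_notMem hiσ', hσ'card]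
    set g := (insert i σ').orderEmbOfFin hρcard with hg
    have hginj : Function.Injective g := g.injective
    have himgg : Finset.univ.image ⇑g = insert i σ' := image_univ_orderEmbOfFin _ hρcard
    obtain ⟨j₀, hj₀⟩ := orderEmbOfFin_exists_eq (insert i σ') hρcard
      (Finset.mem_insert_self i σ')
    have hinj : ∀ j : Fin (d+2), Function.Injective (⇑g ∘ j.succAbove) :=
      fun j => hginj.comp Fin.succAbove_right_injective
    choose c hc0 hc using fun j => gvol_injective d (⇑g ∘ j.succAbove) (hinj j)
    have himg : ∀ j : Fin (d+2),
        Finset.univ.image (⇑g ∘ j.succAbove) = (insert i σ').erase (g j) := by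
      intro j
      rw [image_comp_succAbove ⇑g hginj j, himgg]
    -- all terms except j₀ agree between p and q
    have hterm : ∀ j : Fin (d+2), j ≠ j₀ →
        vol d ((insert i σ').erase (g j)) p = vol d ((insert i σ').erase (g j)) q := by
      intro j hj
      have hgji : g j ≠ i := fun h => hj (hginj (h.trans hj₀.symm))
      have hgjσ : g j ∈ σ' := by
        have h1 : g j ∈ insert i σ' := by
          rw [← himgg]; exact Finset.mem_image_of_mem _ (Finset.mem_univ j)
        rcases Finset.mem_insert.mp h1 with h2 | h2
        · exact absurd h2 hgji
        · exact h2
      have heq : (insert i σ').erase (g j) = insert i (σ'.erase (g j)) :=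
        Finset.erase_insert_of_ne (Ne.symm hgji)
      rw [heq]
      have hT : σ'.erase (g j) ∈ σ'.powersetCard d := by
        rw [Finset.mem_powersetCard]
        refine ⟨Finset.erase_subset _ _, ?_⟩
        rw [Finset.card_erase_of_mem hgjσ, hσ'card]
        omega
      obtain ⟨hins, _⟩ := mem_link_insert (hfaces σ' hσ' _ hT)
      exact hvolF _ hins
    -- flip identity for p and q
    have hp0 := gvol_flip d ⇑g p
    have hq0 := gvol_flip d ⇑g q
    have hsump : ∀ r : ℕ → Fin d → ℝ,
        ∑ j : Fin (d+2), (-1:ℝ)^(j:ℕ) * gvol d (⇑g ∘ j.succAbove) r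
        = ∑ j : Fin (d+2), (-1:ℝ)^(j:ℕ) * (c j * vol d ((insert i σ').erase (g j)) r) := by
      intro r
      refine Finset.sum_congr rfl fun j _ => ?_
      rw [hc j r, himg j]
    rw [hsump p] at hp0
    rw [hsump q] at hq0
    have hsplitp := Finset.add_sum_erase Finset.univ
      (fun j : Fin (d+2) => (-1:ℝ)^(j:ℕ) * (c j * vol d ((insert i σ').erase (g j)) p))
      (Finset.mem_univ j₀)
    have hsplitq := Finset.add_sum_erase Finset.univ
      (fun j : Fin (d+2) => (-1:ℝ)^(j:ℕ) * (c j * vol d ((insert i σ').erase (g j)) q))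
      (Finset.mem_univ j₀)
    have htail : ∑ j ∈ Finset.univ.erase j₀,
          (-1:ℝ)^(j:ℕ) * (c j * vol d ((insert i σ').erase (g j)) p)
        = ∑ j ∈ Finset.univ.erase j₀,
          (-1:ℝ)^(j:ℕ) * (c j * vol d ((insert i σ').erase (g j)) q) := by
      refine Finset.sum_congr rfl fun j hj => ?_
      rw [hterm j (Finset.mem_erase.mp hj).1]
    have hmain : (-1:ℝ)^(j₀:ℕ) * (c j₀ * vol d ((insert i σ').erase (g j₀)) p)
        = (-1:ℝ)^(j₀:ℕ) * (c j₀ * vol d ((insert i σ').erase (g j₀)) q) := by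
      have e1 := hsplitp.trans hp0
      have e2 := hsplitq.trans hq0
      rw [htail] at e1
      linarith [e1, e2]
    rw [hj₀, Finset.erase_insert hiσ'] at hmain
    have hne : (-1:ℝ)^(j₀:ℕ) * c j₀ ≠ 0 :=
      mul_ne_zero (pow_ne_zero _ (by norm_num)) (hc0 j₀)
    have hmain' : ((-1:ℝ)^(j₀:ℕ) * c j₀) * vol d σ' p
        = ((-1:ℝ)^(j₀:ℕ) * c j₀) * vol d σ' q := by
      rw [mul_assoc, mul_assoc]; exact hmain
    exact mul_left_cancel₀ hne hmain'
  -- global agreement away from i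
  have hall : ∀ τ' ⊆ (Finset.Icc 1 n).erase i, τ'.card = d+1 →
      vol d τ' p = vol d τ' q := by
    refine hrigid p q hp' hq' ?_
    intro σ hσ
    rcases Finset.mem_union.mp hσ with hσ | hσ
    · exact hvolF σ (Finset.mem_filter.mp hσ).1
    · exact hLG σ hσ
  by_cases hiτ : i ∈ τ
  · -- the simplex τ contains the removed vertex i
    set l : ℕ → ℕ := fun t => (W.sort (· ≤ ·)).getD (t - 1) 0 with hl
    set σ0 : Finset ℕ := (Finset.Icc 1 (d+1)).image l with hσ0def
    have h0LG : Finset.Icc 1 (d+1) ∈ LGRC d W.card := by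
      rw [LGRC]; exact Finset.mem_insert_self _ _
    have hσ0mem : σ0 ∈ LGRCOn d W := by
      rw [LGRCOn]
      exact Finset.mem_image_of_mem _ h0LG
    obtain ⟨hσ0W, hσ0card⟩ := LGRCOn_mem hd hm hσ0mem
    have hσ0V' : σ0 ⊆ (Finset.Icc 1 n).erase i := hσ0W.trans hWsub
    have hσ0V : σ0 ⊆ Finset.Icc 1 n := hσ0V'.trans (Finset.erase_subset i _)
    set e0 := σ0.orderEmbOfFin hσ0card with he0
    have hvp0 : vol d σ0 p ≠ 0 := vol_ne_zero d _ σ0 hσ0V hσ0card p hp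
    have hvq0 : vol d σ0 q ≠ 0 := vol_ne_zero d _ σ0 hσ0V hσ0card q hq
    have hσ0pq : vol d σ0 p = vol d σ0 q := hall σ0 hσ0V' hσ0card
    have hgvp0 : gvol d ⇑e0 p ≠ 0 := by
      rw [← vol_eq_gvol d σ0 hσ0card p]; exact hvp0
    have hgvq0 : gvol d ⇑e0 q ≠ 0 := by
      rw [← vol_eq_gvol d σ0 hσ0card q]; exact hvq0
    obtain ⟨lamp, hlamp⟩ := exists_lam d p ⇑e0 hgvp0 i
    obtain ⟨lamq, hlamq⟩ := exists_lam d q ⇑e0 hgvq0 i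
    have he0W : ∀ k, e0 k ∈ W := fun k => hσ0W (Finset.orderEmbOfFin_mem σ0 hσ0card k)
    have he0i : ∀ k, e0 k ≠ i := fun k h => hiW (h ▸ he0W k)
    -- the coefficients agree
    have hlameq : ∀ k : Fin (d+1), lamp k = lamq k := by
      intro k
      have hek_mem : e0 k ∈ σ0 := Finset.orderEmbOfFin_mem σ0 hσ0card k
      have hiT : i ∉ σ0.erase (e0 k) := fun h => hiW (hσ0W (Finset.mem_of_mem_erase h))
      have hTcard : (σ0.erase (e0 k)).card = d := by
        rw [Finset.card_erase_of_mem hek_mem, hσ0card]; omega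
      have hτkcard : (insert i (σ0.erase (e0 k))).card = d + 1 := by
        rw [Finset.card_insert_of_notMem hiT, hTcard]
      set ek := (insert i (σ0.erase (e0 k))).orderEmbOfFin hτkcard with hekdef
      have himgek : Finset.univ.image ⇑ek = insert i (σ0.erase (e0 k)) :=
        image_univ_orderEmbOfFin _ hτkcard
      obtain ⟨sk, hsk⟩ := orderEmbOfFin_exists_eq _ hτkcard
        (Finset.mem_insert_self i (σ0.erase (e0 k)))
      have hupd_i : Function.update ⇑ek sk i = ⇑ek := by
        rw [← hsk]; exact Function.update_eq_self sk ⇑ek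
      have hzero : ∀ (r : ℕ → Fin d → ℝ) (j : Fin (d+1)), j ≠ k →
          gvol d (Function.update ⇑ek sk (e0 j)) r = 0 := by
        intro r j hj
        have hj_mem : e0 j ∈ insert i (σ0.erase (e0 k)) := by
          rw [Finset.mem_insert]
          right
          rw [Finset.mem_erase]
          exact ⟨fun h => hj (e0.injective h), Finset.orderEmbOfFin_mem σ0 hσ0card j⟩
        obtain ⟨s', hs'⟩ := orderEmbOfFin_exists_eq _ hτkcard hj_mem
        have hs'sk : s' ≠ sk := fun h => (he0i j) (by rw [← hs', h, hsk])
        rw [← hs']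
        exact gvol_of_not_injective _ _ _ (update_not_injective ⇑ek sk s' hs'sk)
      have hinjk : Function.Injective (Function.update ⇑ek sk (e0 k)) := by
        apply update_injective ⇑ek ek.injective sk (e0 k)
        intro j hjs hcon
        have hmem : ek j ∈ insert i (σ0.erase (e0 k)) := by
          rw [← himgek]; exact Finset.mem_image_of_mem _ (Finset.mem_univ j)
        rw [hcon] at hmem
        rcases Finset.mem_insert.mp hmem with h | h
        · exact he0i k h
        · exact (Finset.notMem_erase (e0 k) σ0) h
      obtain ⟨ck, hck0, hck⟩ := gvol_injective d (Function.update ⇑ek sk (e0 k)) hinjk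
      have himgk : Finset.univ.image (Function.update ⇑ek sk (e0 k)) = σ0 := by
        rw [image_update ⇑ek ek.injective sk (e0 k), himgek, hsk,
          Finset.erase_insert hiT, Finset.insert_erase hek_mem]
      rw [himgk] at hck
      have hcomb : ∀ (r : ℕ → Fin d → ℝ) (lam : Fin (d+1) → ℝ),
          (Fin.cons 1 (r i) : Fin (d+1) → ℝ)
            = ∑ j : Fin (d+1), lam j • (Fin.cons 1 (r (e0 j)) : Fin (d+1) → ℝ) →
          vol d (insert i (σ0.erase (e0 k))) r = lam k * (ck * vol d σ0 r) := by
        intro r lam hlam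
        have hexp := gvol_update_sum d r ⇑ek sk i ⇑e0 lam hlam
        rw [hupd_i] at hexp
        have hsum : (∑ j : Fin (d+1), lam j * gvol d (Function.update ⇑ek sk (e0 j)) r)
            = lam k * gvol d (Function.update ⇑ek sk (e0 k)) r := by
          refine Finset.sum_eq_single k (fun j _ hj => ?_)
            (fun h => absurd (Finset.mem_univ k) h)
          rw [hzero r j hj, mul_zero]
        rw [vol_eq_gvol d _ hτkcard r, ← hekdef, hexp, hsum, hck r]
      have hTk : σ0.erase (e0 k) ∈ σ0.powersetCard d := by
        rw [Finset.mem_powersetCard]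
        exact ⟨Finset.erase_subset _ _, hTcard⟩
      obtain ⟨hins, _⟩ := mem_link_insert (hfaces σ0 hσ0mem _ hTk)
      have hvolτk := hvolF _ hins
      rw [hcomb p lamp hlamp, hcomb q lamq hlamq, ← hσ0pq] at hvolτk
      exact mul_right_cancel₀ (mul_ne_zero hck0 hvp0) hvolτk
    -- final expansion of vol τ
    obtain ⟨s, hs⟩ := orderEmbOfFin_exists_eq τ hτcard hiτ
    set fτ := τ.orderEmbOfFin hτcard with hfτ
    have hupd : Function.update ⇑fτ s i = ⇑fτ := by
      rw [← hs]; exact Function.update_eq_self s ⇑fτ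
    have hexp_p := gvol_update_sum d p ⇑fτ s i ⇑e0 lamp hlamp
    have hexp_q := gvol_update_sum d q ⇑fτ s i ⇑e0 lamq hlamq
    rw [hupd] at hexp_p hexp_q
    rw [vol_eq_gvol d τ hτcard p, vol_eq_gvol d τ hτcard q, ← hfτ, hexp_p, hexp_q]
    refine Finset.sum_congr rfl fun k _ => ?_
    rw [hlameq k]
    congr 1
    by_cases hinj : Function.Injective (Function.update ⇑fτ s (e0 k))
    · obtain ⟨c', hc'0, hc'⟩ := gvol_injective d _ hinj
      rw [hc' p, hc' q]
      congr 1
      apply hall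
      · intro x hx
        rw [Finset.mem_image] at hx
        obtain ⟨j, _, rfl⟩ := hx
        by_cases hjs : j = s
        · subst hjs
          rw [Function.update_self]
          exact hWsub (he0W k)
        · rw [Function.update_of_ne hjs]
          rw [Finset.mem_erase]
          refine ⟨fun h => hjs (fτ.injective (by rw [h, hs])), ?_⟩
          exact hτV (Finset.orderEmbOfFin_mem τ hτcard j)
      · rw [Finset.card_image_of_injective _ hinj, Finset.card_univ, Fintype.card_fin]
    · rw [gvol_of_not_injective _ _ _ hinj, gvol_of_not_injective _ _ _ hinj]
  · exact hall τ (Finset.subset_erase.mpr ⟨hτV, hiτ⟩) hτcard
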